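/- arXiv:1507.02714 — 3 statements merged into one kernel-verified Lean document; each statement's English description precedes it below -/
import Mathlib

section
/- Let P₋, P, P₊ be three non-collinear points in the Euclidean plane, θ ∈ (0, π) the angle between U = P₋ − P and V = P₊ − P, and let r > 0. Set l_t = r/tan(θ/2), l_x = l_t/cos(θ/2), E = P + l_t·U/‖U‖, F = P + l_t·V/‖V‖, and C = P + l_x·(Q − P)/‖Q − P‖, where Q = P₋ + (‖U‖·‖W‖/(‖U‖ + ‖V‖))·W/‖W‖ with W = P₊ − P₋. Then dist(C, E) = r, dist(C, F) = r, the vector C − E is orthogonal to U (⟪C − E, U⟫ = 0), and the vector C − F is orthogonal to V (⟪C − F, V⟫ = 0); that is, the circle of radius r centered at C meets the line through P and P₋ perpendicularly at E and the line through P and P₊ perpendicularly at F. -/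
open scoped RealInnerProductSpace

theorem aux_li (U V : EuclideanSpace ℝ (Fin 2)) (hLI : LinearIndependent ℝ ![U, V]) :
    U ≠ 0 ∧ V ≠ 0 ∧ U ≠ V ∧ ⟪U,V⟫ < ‖U‖*‖V‖ ∧ -(‖U‖*‖V‖) < ⟪U,V⟫ := by
  rw [linearIndependent_fin2] at hLI
  simp only [Matrix.cons_val_one, Matrix.head_cons, Matrix.cons_val_zero] at hLI
  obtain ⟨hV0, hsp⟩ := hLI
  have hU0 : U ≠ 0 := fun h => hsp 0 (by simp [h])
  have hUV : U ≠ V := fun h => hsp 1 (by simp [h])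
  have hVn : (0:ℝ) < ‖V‖ := norm_pos_iff.mpr hV0
  refine ⟨hU0, hV0, hUV, ?_, ?_⟩
  · rw [inner_lt_norm_mul_iff_real]
    intro h
    exact hsp (‖U‖/‖V‖) (by
      rw [div_eq_inv_mul, ← smul_smul, ← h, smul_smul, inv_mul_cancel₀ hVn.ne', one_smul])
  · have h2 := inner_lt_norm_mul_iff_real (x := U) (y := -V)
    simp only [inner_neg_right, norm_neg] at h2
    rw [neg_lt, h2]
    intro h
    exact hsp (-(‖U‖/‖V‖)) (by
      rw [neg_smul, ← smul_neg, div_eq_inv_mul, ← smul_smul, ← h, smul_smul,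
        inv_mul_cancel₀ hVn.ne', one_smul])


set_option maxHeartbeats 1000000 in
/-- the circle of radius `r` centered at the constructed center point `C`
touches the line through `P` and `P₋` perpendicularly at the tangential point `E`,
and the line through `P` and `P₊` perpendicularly at the tangential point `F`. -/
theorem center_point_tangency
    (Pm P Pp : EuclideanSpace ℝ (Fin 2))
    (U V W : EuclideanSpace ℝ (Fin 2))
    (hU : U = Pm - P) (hV : V = Pp - P) (hW : W = Pp - Pm)
    (hLI : LinearIndependent ℝ ![U, V])
    (θ : ℝ) (hθ : θ = Real.arccos (⟪U, V⟫ / (‖U‖ * ‖V‖)))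
    (r : ℝ) (hr : 0 < r)
    (lt lx : ℝ) (hlt : lt = r / Real.tan (θ / 2)) (hlx : lx = lt / Real.cos (θ / 2))
    (lb : ℝ) (hlb : lb = ‖U‖ * ‖W‖ / (‖U‖ + ‖V‖))
    (Q : EuclideanSpace ℝ (Fin 2)) (hQ : Q = Pm + lb • (‖W‖⁻¹ • W))
    (E F C : EuclideanSpace ℝ (Fin 2))
    (hE : E = P + lt • (‖U‖⁻¹ • U))
    (hF : F = P + lt • (‖V‖⁻¹ • V))
    (hC : C = P + lx • (‖Q - P‖⁻¹ • (Q - P))) :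
    dist C E = r ∧ dist C F = r ∧ ⟪C - E, U⟫ = 0 ∧ ⟪C - F, V⟫ = 0 := by
  obtain ⟨hU0, hV0, hUV, hcs1, hcs2⟩ := aux_li U V hLI
  have ha : (0:ℝ) < ‖U‖ := norm_pos_iff.mpr hU0
  have hb : (0:ℝ) < ‖V‖ := norm_pos_iff.mpr hV0
  set a := ‖U‖ with ha'
  clear_value a
  set b := ‖V‖ with hb'
  clear_value b
  set c : ℝ := ⟪U, V⟫ with hc'
  clear_value c
  set s : ℝ := c / (a*b) with hs'
  clear_value s
  have hab : (0:ℝ) < a*b := mul_pos ha hb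
  have hcsv : c = s * (a*b) := by rw [hs', div_mul_cancel₀ _ hab.ne']
  have hs1 : s < 1 := by rw [hs']; exact (div_lt_one hab).mpr hcs1
  have hs2 : -1 < s := by
    rw [hs', lt_div_iff₀ hab]; linarith
  have hcosθ : Real.cos θ = s := by
    rw [hθ]; exact Real.cos_arccos (by linarith) (by linarith)
  have hθpos : 0 < θ := hθ ▸ Real.arccos_pos.mpr hs1
  have hθpi : θ < Real.pi := by
    refine lt_of_le_of_ne (hθ ▸ Real.arccos_le_pi s) ?_
    rw [hθ]
    intro h
    have := Real.arccos_eq_pi.mp h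
    linarith
  set cθ := Real.cos (θ/2) with hcθ'
  clear_value cθ
  set sθ := Real.sin (θ/2) with hsθ'
  clear_value sθ
  have hcpos : 0 < cθ := by
    rw [hcθ']
    exact Real.cos_pos_of_mem_Ioo ⟨by have := Real.pi_pos; linarith, by linarith⟩
  have hspos : 0 < sθ := by
    rw [hsθ']
    exact Real.sin_pos_of_pos_of_lt_pi (by linarith) (by have := Real.pi_pos; linarith)
  have hcsq : cθ^2 = (1+s)/2 := by
    have h := Real.cos_sq (θ/2)
    rw [show 2*(θ/2) = θ by ring, hcosθ] at h
    rw [hcθ', h]; ring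
  have hssq : sθ^2 = (1-s)/2 := by
    have h := Real.sin_sq_add_cos_sq (θ/2)
    rw [← hcθ', ← hsθ'] at h; linarith
  have htan : Real.tan (θ/2) = sθ/cθ := by rw [hsθ', hcθ']; exact Real.tan_eq_sin_div_cos _
  have htanpos : 0 < Real.tan (θ/2) := htan ▸ div_pos hspos hcpos
  have hltpos : 0 < lt := hlt ▸ div_pos hr htanpos
  have h1s : (0:ℝ) < 1 + s := by linarith
  have h2c : 2*cθ^2 = 1 + s := by rw [hcsq]; ring
  -- inner product basics
  have hUU : ⟪U,U⟫ = a^2 := by rw [ha']; exact real_inner_self_eq_norm_sq U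
  have hVV : ⟪V,V⟫ = b^2 := by rw [hb']; exact real_inner_self_eq_norm_sq V
  have hVU : ⟪V,U⟫ = c := by rw [hc']; exact (real_inner_comm V U).symm
  -- vector computations
  have hWv : W = V - U := by rw [hW, hU, hV]; abel
  have hW0 : W ≠ 0 := by rw [hWv, sub_ne_zero]; exact fun h => hUV h.symm
  have hnW : (0:ℝ) < ‖W‖ := norm_pos_iff.mpr hW0
  have habp : (0:ℝ) < a + b := by linarith
  have hlbW : lb * ‖W‖⁻¹ = a/(a+b) := by
    rw [hlb]; field_simp [ha.ne', hb.ne', habp.ne', h1s.ne', hcpos.ne', hspos.ne', hnW.ne']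
  set n : EuclideanSpace ℝ (Fin 2) := a⁻¹ • U + b⁻¹ • V with hn'
  clear_value n
  have hQP : Q - P = (a*b/(a+b)) • n := by
    have h1 : Q - P = U + (lb * ‖W‖⁻¹) • W := by
      rw [hQ, hU, smul_smul]; abel
    rw [h1, hlbW, hWv, hn']
    match_scalars
    · field_simp [ha.ne', hb.ne', habp.ne', h1s.ne', hcpos.ne', hspos.ne', hnW.ne']; ring
    · field_simp [ha.ne', hb.ne', habp.ne', h1s.ne', hcpos.ne', hspos.ne', hnW.ne']; try ring
  have hinn : ⟪n, n⟫ = 2 + 2*s := by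
    rw [hn']
    rw [inner_add_left, inner_add_right, inner_add_right, real_inner_smul_left,
      real_inner_smul_left, real_inner_smul_left, real_inner_smul_left,
      real_inner_smul_right, real_inner_smul_right, real_inner_smul_right,
      real_inner_smul_right, hUU, hVV, hVU, ← hc', hcsv]
    field_simp [ha.ne', hb.ne', habp.ne', h1s.ne', hcpos.ne', hspos.ne', hnW.ne']
    ring
  have hnn : ‖n‖ = 2*cθ := by
    have h2 : ‖n‖^2 = (2*cθ)^2 := by
      rw [← real_inner_self_eq_norm_sq, hinn, mul_pow, hcsq]; ring
    have h4 : Real.sqrt (‖n‖^2) = Real.sqrt ((2*cθ)^2) := by rw [h2]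
    rwa [Real.sqrt_sq (norm_nonneg n), Real.sqrt_sq (by linarith : (0:ℝ) ≤ 2*cθ)] at h4
  have habq : a*b/(a+b) ≠ 0 := (div_pos hab habp).ne'
  have hQPnorm : ‖Q - P‖ = (a*b/(a+b)) * (2*cθ) := by
    rw [hQP, norm_smul, Real.norm_eq_abs, abs_of_pos (div_pos hab habp), hnn]
  have hQPn : ‖Q - P‖⁻¹ • (Q - P) = (2*cθ)⁻¹ • n := by
    rw [hQPnorm, hQP, smul_smul, mul_inv, mul_comm ((a*b/(a+b))⁻¹), mul_assoc,
      inv_mul_cancel₀ habq, mul_one]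
  set κ : ℝ := lt/(1+s) with hκ'
  clear_value κ
  have hκpos : 0 < κ := by rw [hκ']; exact div_pos hltpos h1s
  have hCP : C - P = κ • n := by
    rw [hC, hQPn]
    have h4 : P + lx • ((2*cθ)⁻¹ • n) - P = (lx * (2*cθ)⁻¹) • n := by
      rw [smul_smul]; abel
    rw [h4]
    congr 1
    rw [hκ', hlx, ← h2c]
    field_simp [ha.ne', hb.ne', habp.ne', h1s.ne', hcpos.ne', hspos.ne', hnW.ne']
  have hEP : E - P = (lt/a) • U := by
    rw [hE, smul_smul]
    have : lt * a⁻¹ = lt / a := by ring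
    rw [this]; abel
  have hFP : F - P = (lt/b) • V := by
    rw [hF, smul_smul]
    have : lt * b⁻¹ = lt / b := by ring
    rw [this]; abel
  have hltκ : lt = κ * (1+s) := by rw [hκ']; field_simp [ha.ne', hb.ne', habp.ne', h1s.ne', hcpos.ne', hspos.ne', hnW.ne']
  have hCE : C - E = (-(κ*s)/a) • U + (κ/b) • V := by
    have h4 : C - E = (C - P) - (E - P) := by abel
    rw [h4, hCP, hEP, hn', smul_add, smul_smul, smul_smul]
    match_scalars
    · rw [hltκ]; field_simp [ha.ne', hb.ne', habp.ne', h1s.ne', hcpos.ne', hspos.ne', hnW.ne']; ring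
    · field_simp [ha.ne', hb.ne', habp.ne', h1s.ne', hcpos.ne', hspos.ne', hnW.ne']; try ring
  have hCF : C - F = (κ/a) • U + (-(κ*s)/b) • V := by
    have h4 : C - F = (C - P) - (F - P) := by abel
    rw [h4, hCP, hFP, hn', smul_add, smul_smul, smul_smul]
    match_scalars
    · field_simp [ha.ne', hb.ne', habp.ne', h1s.ne', hcpos.ne', hspos.ne', hnW.ne']; try ring
    · rw [hltκ]; field_simp [ha.ne', hb.ne', habp.ne', h1s.ne', hcpos.ne', hspos.ne', hnW.ne']; ring
  -- orthogonality
  have hCEU : ⟪C - E, U⟫ = 0 := by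
    rw [hCE, inner_add_left, real_inner_smul_left, real_inner_smul_left, hUU, hVU, hcsv]
    field_simp [ha.ne', hb.ne', habp.ne', h1s.ne', hcpos.ne', hspos.ne', hnW.ne']
    ring
  have hCFV : ⟪C - F, V⟫ = 0 := by
    rw [hCF, inner_add_left, real_inner_smul_left, real_inner_smul_left, hVV, ← hc', hcsv]
    field_simp [ha.ne', hb.ne', habp.ne', h1s.ne', hcpos.ne', hspos.ne', hnW.ne']
    ring
  -- distances
  have hrκ : r^2 = κ^2 * (1-s^2) := by
    have hrlt : r = lt * (sθ/cθ) := by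
      rw [hlt, htan]; field_simp [ha.ne', hb.ne', habp.ne', h1s.ne', hcpos.ne', hspos.ne', hnW.ne']
    rw [hrlt, hκ', mul_pow, div_pow, div_pow, hssq, hcsq]
    field_simp [ha.ne', hb.ne', habp.ne', h1s.ne', hcpos.ne', hspos.ne', hnW.ne']
    ring
  have hCE2 : ⟪C - E, C - E⟫ = κ^2 * (1-s^2) := by
    rw [hCE, inner_add_left, inner_add_right, inner_add_right, real_inner_smul_left,
      real_inner_smul_left, real_inner_smul_left, real_inner_smul_left,
      real_inner_smul_right, real_inner_smul_right, real_inner_smul_right,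
      real_inner_smul_right, hUU, hVV, hVU, ← hc', hcsv]
    field_simp [ha.ne', hb.ne', habp.ne', h1s.ne', hcpos.ne', hspos.ne', hnW.ne']
    ring
  have hCF2 : ⟪C - F, C - F⟫ = κ^2 * (1-s^2) := by
    rw [hCF, inner_add_left, inner_add_right, inner_add_right, real_inner_smul_left,
      real_inner_smul_left, real_inner_smul_left, real_inner_smul_left,
      real_inner_smul_right, real_inner_smul_right, real_inner_smul_right,
      real_inner_smul_right, hUU, hVV, hVU, ← hc', hcsv]
    field_simp [ha.ne', hb.ne', habp.ne', h1s.ne', hcpos.ne', hspos.ne', hnW.ne']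
    ring
  have hdE : dist C E ^ 2 = r ^ 2 := by
    rw [dist_eq_norm, ← real_inner_self_eq_norm_sq, hCE2, hrκ]
  have hdF : dist C F ^ 2 = r ^ 2 := by
    rw [dist_eq_norm, ← real_inner_self_eq_norm_sq, hCF2, hrκ]
  have hdE' : dist C E = r := by
    have h4 : Real.sqrt (dist C E ^ 2) = Real.sqrt (r ^ 2) := by rw [hdE]
    rwa [Real.sqrt_sq dist_nonneg, Real.sqrt_sq hr.le] at h4
  have hdF' : dist C F = r := by
    have h4 : Real.sqrt (dist C F ^ 2) = Real.sqrt (r ^ 2) := by rw [hdF]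
    rwa [Real.sqrt_sq dist_nonneg, Real.sqrt_sq hr.le] at h4
  exact ⟨hdE', hdF', hCEU, hCFV⟩
end

section
/- Tangency of the constructed circular arc to the tangential line: let P₋, P, P₊ be three non-collinear points in the Euclidean plane, θ ∈ (0, π) the angle between U = P₋ − P and V = P₊ − P, r > 0, l_t = r/tan(θ/2), l_x = l_t/cos(θ/2), E = P + l_t·U/‖U‖, and C = P + l_x·(Q − P)/‖Q − P‖ where Q = P₋ + (‖U‖·‖W‖/(‖U‖ + ‖V‖))·W/‖W‖ and W = P₊ − P₋. Then every point X on the line through P and P₋ satisfies dist(X, C) ≥ r, with equality if and only if X = E; equivalently, the line through P and P₋ is tangent at E to the circle of radius r centered at C. -/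
set_option maxHeartbeats 1000000


open scoped RealInnerProductSpace

/-- the line through `P` and `P₋` is tangent at the tangential point `E` to
the circle of radius `r` centered at the constructed center point `C`: every point `X`
on the line satisfies `dist X C ≥ r`, with equality if and only if `X = E`. -/
theorem line_tangent_to_constructed_circle
    (Pm P Pp : EuclideanSpace ℝ (Fin 2))
    (U V W : EuclideanSpace ℝ (Fin 2))
    (hU : U = Pm - P) (hV : V = Pp - P) (hW : W = Pp - Pm)
    (hLI : LinearIndependent ℝ ![U, V])
    (θ : ℝ) (hθ : θ = Real.arccos (⟪U, V⟫ / (‖U‖ * ‖V‖)))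
    (r : ℝ) (hr : 0 < r)
    (lt lx : ℝ) (hlt : lt = r / Real.tan (θ / 2)) (hlx : lx = lt / Real.cos (θ / 2))
    (lb : ℝ) (hlb : lb = ‖U‖ * ‖W‖ / (‖U‖ + ‖V‖))
    (Q : EuclideanSpace ℝ (Fin 2)) (hQ : Q = Pm + lb • (‖W‖⁻¹ • W))
    (E C : EuclideanSpace ℝ (Fin 2))
    (hE : E = P + lt • (‖U‖⁻¹ • U))
    (hC : C = P + lx • (‖Q - P‖⁻¹ • (Q - P))) :
    ∀ X ∈ affineSpan ℝ ({P, Pm} : Set (EuclideanSpace ℝ (Fin 2))),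
      r ≤ dist X C ∧ (dist X C = r ↔ X = E) := by
  have hpair := LinearIndependent.pair_iff.mp hLI
  have hU0 : U ≠ 0 := by
    intro h; rcases hpair 1 0 (by simp [h]) with ⟨h1, _⟩; norm_num at h1
  have hV0 : V ≠ 0 := by
    intro h; rcases hpair 0 1 (by simp [h]) with ⟨_, h1⟩; norm_num at h1
  have ha : (0:ℝ) < ‖U‖ := norm_pos_iff.mpr hU0
  have hb : (0:ℝ) < ‖V‖ := norm_pos_iff.mpr hV0
  have hab : (0:ℝ) < ‖U‖ + ‖V‖ := by linarith
  -- strict Cauchy-Schwarz both sides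
  have hne1 : ‖V‖ • U ≠ ‖U‖ • V := by
    intro h
    rcases hpair ‖V‖ (-‖U‖) (by rw [neg_smul, h]; abel) with ⟨h1, _⟩
    exact hb.ne' h1
  have hcs1 : ⟪U, V⟫ < ‖U‖ * ‖V‖ := inner_lt_norm_mul_iff_real.mpr hne1
  have hne2 : ‖V‖ • (-U) ≠ ‖-U‖ • V := by
    rw [norm_neg, smul_neg]
    intro h
    rcases hpair ‖V‖ ‖U‖ (by rw [← neg_eq_iff_eq_neg.mpr h.symm]; abel) with ⟨h1, _⟩
    exact hb.ne' h1
  have hcs2 : -(‖U‖ * ‖V‖) < ⟪U, V⟫ := by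
    have := inner_lt_norm_mul_iff_real.mpr hne2
    rw [norm_neg, inner_neg_left] at this
    linarith
  -- angle facts
  have hc1 : ⟪U, V⟫ / (‖U‖ * ‖V‖) < 1 := (div_lt_one (by positivity)).mpr hcs1
  have hc2 : (-1:ℝ) < ⟪U, V⟫ / (‖U‖ * ‖V‖) := by
    rw [lt_div_iff₀ (by positivity)]; linarith
  have hθ1 : 0 < θ := hθ ▸ Real.arccos_pos.mpr hc1
  have hθ2 : θ < Real.pi := by
    refine lt_of_le_of_ne (hθ ▸ Real.arccos_le_pi _) ?_
    rw [hθ]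
    intro h
    have := Real.arccos_eq_pi.mp h
    linarith
  have hcosθ : Real.cos θ = ⟪U, V⟫ / (‖U‖ * ‖V‖) := by
    rw [hθ]; exact Real.cos_arccos (by linarith) (by linarith)
  have hUVi : ⟪U, V⟫ = Real.cos θ * (‖U‖ * ‖V‖) := by
    rw [hcosθ]; field_simp
  have hco : 0 < Real.cos (θ/2) :=
    Real.cos_pos_of_mem_Ioo ⟨by linarith [Real.pi_pos], by linarith⟩
  have hsi : 0 < Real.sin (θ/2) :=
    Real.sin_pos_of_pos_of_lt_pi (by linarith) (by linarith [Real.pi_pos])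
  have hcs : Real.cos θ = 2 * Real.cos (θ/2)^2 - 1 := by
    have h := Real.cos_sq (θ/2)
    rw [show 2*(θ/2) = θ by ring] at h
    linarith
  have hss : Real.sin (θ/2)^2 = 1 - Real.cos (θ/2)^2 := by
    have := Real.sin_sq_add_cos_sq (θ/2); linarith
  have hrc : r * Real.cos (θ/2) = lt * Real.sin (θ/2) := by
    rw [hlt, Real.tan_eq_sin_div_cos]
    field_simp
  have hr2sq : r^2 * Real.cos (θ/2)^2 = lt^2 * (1 - Real.cos (θ/2)^2) := by
    linear_combination (r * Real.cos (θ/2) + lt * Real.sin (θ/2)) * hrc + lt^2 * hss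
  -- geometry
  have hPm : Pm = P + U := by rw [hU]; abel
  have hWVU : W = V - U := by rw [hW, hU, hV]; abel
  have hUneV : U ≠ V := by
    intro h; rcases hpair (-1) 1 (by rw [h]; module) with ⟨h1, _⟩; norm_num at h1
  have hW0 : W ≠ 0 := by rw [hWVU, sub_ne_zero]; exact fun h => hUneV h.symm
  have hw : (0:ℝ) < ‖W‖ := norm_pos_iff.mpr hW0
  have hQP : Q - P = (‖V‖/(‖U‖+‖V‖)) • U + (‖U‖/(‖U‖+‖V‖)) • V := by
    have h1 : lb • (‖W‖⁻¹ • W) = (‖U‖/(‖U‖+‖V‖)) • (V - U) := by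
      rw [hWVU, smul_smul]
      congr 1
      rw [hlb, ← hWVU]
      field_simp
    rw [hQ, h1, hPm]
    match_scalars <;> field_simp <;> ring
  have hinner_sq : ∀ (α β : ℝ), ‖α • U + β • V‖^2 =
      α^2*‖U‖^2 + 2*α*β*(Real.cos θ * (‖U‖ * ‖V‖)) + β^2*‖V‖^2 := by
    intro α β
    rw [← real_inner_self_eq_norm_sq, real_inner_add_add_self]
    simp only [real_inner_smul_left, real_inner_smul_right, real_inner_self_eq_norm_sq, hUVi,
      norm_smul, Real.norm_eq_abs, mul_pow, sq_abs]
    ring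
  have hQPnorm : ‖Q - P‖ = (‖U‖*‖V‖/(‖U‖+‖V‖)) * (2*Real.cos (θ/2)) := by
    have h2 : ‖Q - P‖^2 = ((‖U‖*‖V‖/(‖U‖+‖V‖)) * (2*Real.cos (θ/2)))^2 := by
      rw [hQP, hinner_sq, hcs]
      field_simp
      ring
    calc ‖Q - P‖ = Real.sqrt (‖Q - P‖^2) := (Real.sqrt_sq (norm_nonneg _)).symm
      _ = Real.sqrt (((‖U‖*‖V‖/(‖U‖+‖V‖)) * (2*Real.cos (θ/2)))^2) := by rw [h2]
      _ = _ := Real.sqrt_sq (by positivity)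
  have hane : ‖U‖ ≠ 0 := ha.ne'
  have hbne : ‖V‖ ≠ 0 := hb.ne'
  have habne : ‖U‖ + ‖V‖ ≠ 0 := hab.ne'
  have hcone : Real.cos (θ/2) ≠ 0 := hco.ne'
  have hCE : C - E = (-(lt*Real.cos θ)/(2*Real.cos (θ/2)^2*‖U‖)) • U
      + (lt/(2*Real.cos (θ/2)^2*‖V‖)) • V := by
    rw [hC, hE, hQPnorm, hQP, hlx, hcs]
    match_scalars <;> (field_simp; try ring)
  have key1 : ⟪U, C - E⟫ = 0 := by
    rw [hCE, inner_add_right, real_inner_smul_right, real_inner_smul_right,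
      real_inner_self_eq_norm_sq, hUVi]
    field_simp
    ring
  have key2 : ‖C - E‖^2 = r^2 := by
    rw [hCE, hinner_sq, hcs]
    field_simp
    linear_combination (-4 * Real.cos (θ/2)^2) * hr2sq
  have hCEr : ‖C - E‖ = r := by
    calc ‖C - E‖ = Real.sqrt (‖C - E‖^2) := (Real.sqrt_sq (norm_nonneg _)).symm
      _ = Real.sqrt (r^2) := by rw [key2]
      _ = r := Real.sqrt_sq hr.le
  intro X hX
  have hX' : (X - P) +ᵥ P ∈ affineSpan ℝ ({P, Pm} : Set (EuclideanSpace ℝ (Fin 2))) := by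
    simpa [vadd_eq_add, sub_add_cancel] using hX
  obtain ⟨t, ht⟩ := (vadd_left_mem_affineSpan_pair).mp hX'
  have hXE : X - E = (t - lt * ‖U‖⁻¹) • U := by
    have hXP : X - P = t • U := by rw [← ht, vsub_eq_sub, ← hU]
    have h2 : X - E = (X - P) - lt • (‖U‖⁻¹ • U) := by rw [hE]; abel
    rw [h2, hXP]
    match_scalars
    ring
  have hinner0 : ⟪X - E, C - E⟫ = 0 := by
    rw [hXE, real_inner_smul_left, key1, mul_zero]
  have hdist : dist X C ^ 2 = ‖X - E‖^2 + r^2 := by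
    rw [dist_eq_norm]
    have h3 : X - C = (X - E) - (C - E) := by abel
    rw [h3, norm_sub_sq_real, hinner0, key2]
    ring
  have hd0 : (0:ℝ) ≤ dist X C := dist_nonneg
  have hge : r ≤ dist X C := by nlinarith [sq_nonneg ‖X - E‖, norm_nonneg (X - E)]
  refine ⟨hge, ?_, ?_⟩
  · intro h
    have h4 : ‖X - E‖^2 = 0 := by nlinarith
    have h5 : X - E = 0 := by
      simpa using (pow_eq_zero_iff (two_ne_zero)).mp h4
    exact sub_eq_zero.mp h5
  · intro h
    rw [h, dist_eq_norm, ← norm_neg]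
    simpa [neg_sub] using hCEr
end

section
/- The distance from the center of curvature to each tangential line equals the radius: under the construction of the center point C from three non-collinear points P₋, P, P₊ and radius r > 0 (with θ the angle between U = P₋ − P and V = P₊ − P, l_t = r/tan(θ/2), l_x = l_t/cos(θ/2), C = P + l_x·(Q − P)/‖Q − P‖, Q = P₋ + (‖U‖·‖W‖/(‖U‖ + ‖V‖))·W/‖W‖, W = P₊ − P₋), the infimum distance from C to the line through P and P₋ equals r, and the infimum distance from C to the line through P and P₊ equals r. -/
open scoped RealInnerProductSpace

/-- If the squared distance from `C` to the foot of perpendicular on the line through `P` and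
`A` equals `r ^ 2`, then the infimum distance from `C` to that line is `r`. -/
lemma infDist_line_aux (P A C : EuclideanSpace ℝ (Fin 2)) (r : ℝ) (hr : 0 ≤ r)
    (he : A - P ≠ 0)
    (hkey : ‖C - P‖ ^ 2 - ⟪C - P, A - P⟫ ^ 2 / ‖A - P‖ ^ 2 = r ^ 2) :
    Metric.infDist C ((affineSpan ℝ ({P, A} : Set (EuclideanSpace ℝ (Fin 2)))) :
        Set (EuclideanSpace ℝ (Fin 2))) = r := by
  set u : EuclideanSpace ℝ (Fin 2) := A - P with hu
  have hupos : (0:ℝ) < ‖u‖ := norm_pos_iff.mpr he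
  have he2 : (0:ℝ) < ‖u‖ ^ 2 := by positivity
  set ip : ℝ := ⟪C - P, u⟫ with hip
  set t : ℝ := ip / ‖u‖ ^ 2 with ht
  set F : EuclideanSpace ℝ (Fin 2) := P + t • u with hF
  have horth : ⟪C - F, u⟫ = 0 := by
    rw [hF, sub_add_eq_sub_sub, inner_sub_left, real_inner_smul_left,
      real_inner_self_eq_norm_sq, ← hip, ht, div_mul_cancel₀ _ he2.ne', sub_self]
  have hCF : C - F = (C - P) - t • u := by rw [hF]; abel
  have hCFsq : ‖C - F‖ ^ 2 = r ^ 2 := by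
    rw [hCF, norm_sub_sq_real, real_inner_smul_right, ← hip, norm_smul,
      mul_pow, Real.norm_eq_abs, sq_abs]
    have h1 : t * ip * 2 - t ^ 2 * ‖u‖ ^ 2 = ip ^ 2 / ‖u‖ ^ 2 := by
      rw [ht]; field_simp; ring
    nlinarith [hkey]
  have hCFr : ‖C - F‖ = r := by
    nlinarith [norm_nonneg (C - F)]
  have hFmem : F ∈ affineSpan ℝ ({P, A} : Set (EuclideanSpace ℝ (Fin 2))) := by
    have hFe : F = t • (A -ᵥ P) +ᵥ P := by
      rw [hF]; simp [hu, add_comm]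
    rw [hFe]
    exact vadd_left_mem_affineSpan_pair.mpr ⟨t, rfl⟩
  refine le_antisymm ?_ ?_
  · calc Metric.infDist C _ ≤ dist C F := Metric.infDist_le_dist_of_mem hFmem
    _ = r := by rw [dist_eq_norm, hCFr]
  · refine le_of_not_gt fun hlt => ?_
    obtain ⟨y, hy, hdy⟩ := (Metric.infDist_lt_iff
      ⟨P, left_mem_affineSpan_pair ℝ P A⟩).mp hlt
    have hy2 : y ∈ affineSpan ℝ ({P, A} : Set (EuclideanSpace ℝ (Fin 2))) := hy
    have hy' : (y - P) +ᵥ P ∈ affineSpan ℝ ({P, A} : Set (EuclideanSpace ℝ (Fin 2))) := by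
      simpa using hy2
    obtain ⟨s, hs⟩ := vadd_left_mem_affineSpan_pair.mp hy'
    have hsu : s • u = y - P := by simpa [hu] using hs
    have hCy : C - y = (C - F) + (t - s) • u := by
      rw [hCF, sub_smul, hsu]; abel
    have hdsq : dist C y ^ 2 = ‖C - F‖ ^ 2 + ‖(t - s) • u‖ ^ 2 := by
      rw [dist_eq_norm, hCy, norm_add_sq_real, real_inner_smul_right, horth]
      ring
    have h1 : r ≤ dist C y := by
      nlinarith [dist_nonneg (x := C) (y := y), sq_nonneg ‖(t - s) • u‖,
        norm_nonneg ((t - s) • u)]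
    linarith

/-- the infimum distance from the constructed center of curvature `C` to the
line through `P` and `P₋`, and to the line through `P` and `P₊`, both equal the radius `r`. -/
theorem infDist_center_to_tangential_lines
    (Pm P Pp : EuclideanSpace ℝ (Fin 2))
    (U V W : EuclideanSpace ℝ (Fin 2))
    (hU : U = Pm - P) (hV : V = Pp - P) (hW : W = Pp - Pm)
    (hLI : LinearIndependent ℝ ![U, V])
    (θ : ℝ) (hθ : θ = Real.arccos (⟪U, V⟫ / (‖U‖ * ‖V‖)))
    (r : ℝ) (hr : 0 < r)
    (lt lx : ℝ) (hlt : lt = r / Real.tan (θ / 2)) (hlx : lx = lt / Real.cos (θ / 2))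
    (lb : ℝ) (hlb : lb = ‖U‖ * ‖W‖ / (‖U‖ + ‖V‖))
    (Q : EuclideanSpace ℝ (Fin 2)) (hQ : Q = Pm + lb • (‖W‖⁻¹ • W))
    (C : EuclideanSpace ℝ (Fin 2))
    (hC : C = P + lx • (‖Q - P‖⁻¹ • (Q - P))) :
    Metric.infDist C ((affineSpan ℝ ({P, Pm} : Set (EuclideanSpace ℝ (Fin 2)))) :
        Set (EuclideanSpace ℝ (Fin 2))) = r ∧
    Metric.infDist C ((affineSpan ℝ ({P, Pp} : Set (EuclideanSpace ℝ (Fin 2)))) :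
        Set (EuclideanSpace ℝ (Fin 2))) = r := by
  -- consequences of linear independence
  rw [linearIndependent_fin2] at hLI
  obtain ⟨hV0, hnd⟩ := hLI
  simp only [Matrix.cons_val_one, Matrix.head_cons, Matrix.cons_val_zero] at hV0 hnd
  have hU0 : U ≠ 0 := fun h => hnd 0 (by simp [h])
  have ha' : 0 < ‖U‖ := norm_pos_iff.mpr hU0
  have hb' : 0 < ‖V‖ := norm_pos_iff.mpr hV0
  -- strict Cauchy-Schwarz
  have hcs1 : ⟪U, V⟫ < ‖U‖ * ‖V‖ := by
    refine inner_lt_norm_mul_iff_real.mpr fun h => hnd (‖V‖⁻¹ * ‖U‖) ?_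
    rw [mul_smul, ← h, smul_smul, inv_mul_cancel₀ hb'.ne', one_smul]
  have hcs2 : -(‖U‖ * ‖V‖) < ⟪U, V⟫ := by
    have h : ⟪U, -V⟫ < ‖U‖ * ‖-V‖ := by
      refine inner_lt_norm_mul_iff_real.mpr fun h => hnd (-(‖V‖⁻¹ * ‖U‖)) ?_
      rw [norm_neg, smul_neg] at h
      have h4 := congrArg (fun x => ‖V‖⁻¹ • x) h
      simp only [smul_smul, smul_neg] at h4
      rw [inv_mul_cancel₀ hb'.ne', one_smul] at h4
      rw [neg_smul]
      exact h4.symm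
    rw [inner_neg_right, norm_neg] at h
    linarith
  -- generalize the scalar quantities
  obtain ⟨c, hc⟩ : ∃ x : ℝ, ⟪U, V⟫ = x := ⟨_, rfl⟩
  obtain ⟨a, hha⟩ : ∃ x : ℝ, ‖U‖ = x := ⟨_, rfl⟩
  obtain ⟨b, hhb⟩ : ∃ x : ℝ, ‖V‖ = x := ⟨_, rfl⟩
  rw [hc, hha, hhb] at hθ hcs1 hcs2
  rw [hha, hhb] at hlb
  have ha : 0 < a := hha ▸ ha'
  have hb : 0 < b := hhb ▸ hb'
  have hab : 0 < a * b := mul_pos ha hb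
  have habs : 0 < a + b := by linarith
  have habpc : 0 < a * b + c := by linarith
  have habmc : 0 < a * b - c := by linarith
  have hWVU : W = V - U := by rw [hW, hV, hU]; abel
  have hW0 : W ≠ 0 := by
    rw [hWVU]
    intro h
    exact hnd 1 (by rw [one_smul]; exact sub_eq_zero.mp h)
  -- the angle
  have hm1 : -1 < c / (a * b) := (lt_div_iff₀ hab).mpr (by linarith)
  have h1 : c / (a * b) < 1 := (div_lt_one hab).mpr hcs1
  have hcos : Real.cos θ = c / (a * b) := by
    rw [hθ]; exact Real.cos_arccos hm1.le h1.le
  have hθpos : 0 < θ := by rw [hθ]; exact Real.arccos_pos.mpr h1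
  have hθle : θ ≤ Real.pi := by rw [hθ]; exact Real.arccos_le_pi _
  have hθlt : θ < Real.pi := by
    refine lt_of_le_of_ne hθle fun h => ?_
    rw [h, Real.cos_pi] at hcos
    linarith
  have hpi : 0 < Real.pi := Real.pi_pos
  have hsipos : 0 < Real.sin (θ / 2) :=
    Real.sin_pos_of_pos_of_lt_pi (by linarith) (by linarith)
  have hcopos : 0 < Real.cos (θ / 2) :=
    Real.cos_pos_of_mem_Ioo ⟨by linarith, by linarith⟩
  have hsisq : Real.sin (θ / 2) ^ 2 = (a * b - c) / (2 * (a * b)) := by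
    rw [Real.sin_sq_eq_half_sub, show 2 * (θ / 2) = θ by ring, hcos,
      eq_div_iff (by positivity : (2 * (a * b)) ≠ 0)]
    field_simp
    try ring
    try tauto
  have hlxsi : lx * Real.sin (θ / 2) = r := by
    rw [hlx, hlt, Real.tan_eq_sin_div_cos]
    field_simp
  have hlx2 : lx ^ 2 = r ^ 2 * (2 * (a * b)) / (a * b - c) := by
    have h2 : lx ^ 2 * ((a * b - c) / (2 * (a * b))) = r ^ 2 := by
      rw [← hsisq, ← mul_pow, hlxsi]
    rw [eq_div_iff habmc.ne', ← h2]
    field_simp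
  -- the point Q
  have hw : ‖W‖ ≠ 0 := norm_ne_zero_iff.mpr hW0
  have hq : Q - P = (b / (a + b)) • U + (a / (a + b)) • V := by
    have h1 : Q - P = (Pm - P) + (lb * ‖W‖⁻¹) • W := by
      rw [hQ, smul_smul]; abel
    have h2 : lb * ‖W‖⁻¹ = a / (a + b) := by
      rw [hlb]
      field_simp
    rw [h1, h2, ← hU, hWVU, smul_sub]
    have h3 : (1 : ℝ) - a / (a + b) = b / (a + b) := by
      field_simp
      ring
    calc U + ((a / (a + b)) • V - (a / (a + b)) • U)
        = ((1 : ℝ) - a / (a + b)) • U + (a / (a + b)) • V := by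
          rw [sub_smul, one_smul]; abel
      _ = (b / (a + b)) • U + (a / (a + b)) • V := by rw [h3]
  have hqU : ⟪Q - P, U⟫ = a * (a * b + c) / (a + b) := by
    rw [hq, inner_add_left, real_inner_smul_left, real_inner_smul_left,
      real_inner_self_eq_norm_sq, real_inner_comm U V, hc, hha]
    field_simp
  have hqV : ⟪Q - P, V⟫ = b * (a * b + c) / (a + b) := by
    rw [hq, inner_add_left, real_inner_smul_left, real_inner_smul_left,
      real_inner_self_eq_norm_sq, hc, hhb]
    field_simp
    ring
  have hqq : ‖Q - P‖ ^ 2 = 2 * (a * b) * (a * b + c) / (a + b) ^ 2 := by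
    rw [← real_inner_self_eq_norm_sq]
    nth_rewrite 1 [hq]
    rw [inner_add_left, real_inner_smul_left, real_inner_smul_left,
      real_inner_comm (Q - P) U, real_inner_comm (Q - P) V, hqU, hqV]
    field_simp
    ring
  have hn2pos : (0:ℝ) < ‖Q - P‖ ^ 2 := by rw [hqq]; positivity
  have hn0 : ‖Q - P‖ ≠ 0 := by
    intro h; rw [h] at hn2pos; norm_num at hn2pos
  -- the center C
  have hCP : C - P = (lx * ‖Q - P‖⁻¹) • (Q - P) := by
    rw [hC, add_sub_cancel_left, smul_smul]
  have hCPsq : ‖C - P‖ ^ 2 = lx ^ 2 := by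
    rw [hCP, norm_smul, mul_pow, Real.norm_eq_abs, sq_abs, mul_pow]
    field_simp
  -- the common algebraic identity
  have alg : ∀ e : ℝ, e ≠ 0 →
      r ^ 2 * (2 * (a * b)) / (a * b - c)
        - (r ^ 2 * (2 * (a * b)) / (a * b - c)) * (e * (a * b + c) / (a + b)) ^ 2
          / (2 * (a * b) * (a * b + c) / (a + b) ^ 2) / e ^ 2 = r ^ 2 := by
    intro e he
    have h1 : a ≠ 0 := ha.ne'
    have h2 : b ≠ 0 := hb.ne'
    have h3 : a + b ≠ 0 := habs.ne'
    have h4 : a * b + c ≠ 0 := habpc.ne'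
    have h5 : a * b - c ≠ 0 := habmc.ne'
    field_simp
    ring
  constructor
  · refine infDist_line_aux P Pm C r hr.le (by rw [← hU]; exact hU0) ?_
    rw [← hU]
    have hipU : ⟪C - P, U⟫ = lx * ‖Q - P‖⁻¹ * (a * (a * b + c) / (a + b)) := by
      rw [hCP, real_inner_smul_left, hqU]
    have hipU2 : ⟪C - P, U⟫ ^ 2
        = lx ^ 2 * (a * (a * b + c) / (a + b)) ^ 2
          / (2 * (a * b) * (a * b + c) / (a + b) ^ 2) := by
      rw [hipU, mul_pow, mul_pow, inv_pow, hqq]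
      ring
    rw [hCPsq, hipU2, hlx2, hha]
    exact alg a ha.ne'
  · refine infDist_line_aux P Pp C r hr.le (by rw [← hV]; exact hV0) ?_
    rw [← hV]
    have hipV : ⟪C - P, V⟫ = lx * ‖Q - P‖⁻¹ * (b * (a * b + c) / (a + b)) := by
      rw [hCP, real_inner_smul_left, hqV]
    have hipV2 : ⟪C - P, V⟫ ^ 2
        = lx ^ 2 * (b * (a * b + c) / (a + b)) ^ 2
          / (2 * (a * b) * (a * b + c) / (a + b) ^ 2) := by
      rw [hipV, mul_pow, mul_pow, inv_pow, hqq]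
      ring
    rw [hCPsq, hipV2, hlx2, hhb]
    exact alg b hb.ne'
end
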